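/- Define η(u) = u·arctan(1/(2u)) + 2u²·arcsinh²(1/(2u)) and β(u) = 2u·arcsinh(1/(2u)) for u > 0. Then η(u) − β(u)² = 1/(1440 u⁴) + O(1/u⁶) as u → ∞. -/

import Mathlib

open Filter

private lemma arctan_ub {x : ℝ} (hx : 0 ≤ x) :
    Real.arctan x ≤ x - x^3/3 + x^5/5 := by
  have key : ∀ t : ℝ, HasDerivAt (fun s => s - s^3/3 + s^5/5 - Real.arctan s)
      (1 - t^2 + t^4 - 1/(1+t^2)) t := by
    intro t
    have h := (((hasDerivAt_id t).sub ((hasDerivAt_pow 3 t).div_const 3)).add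
        ((hasDerivAt_pow 5 t).div_const 5)).sub (Real.hasDerivAt_arctan t)
    refine h.congr_deriv ?_
    push_cast; ring
  have mono : MonotoneOn (fun s => s - s^3/3 + s^5/5 - Real.arctan s) (Set.Ici 0) := by
    apply monotoneOn_of_deriv_nonneg (convex_Ici 0)
    · exact fun t _ => (key t).continuousAt.continuousWithinAt
    · exact fun t _ => (key t).differentiableAt.differentiableWithinAt
    · intro t _
      rw [(key t).deriv]
      have h1 : (0:ℝ) < 1 + t^2 := by positivity
      have : 1/(1+t^2) ≤ 1 - t^2 + t^4 := by
        rw [div_le_iff₀ h1]; nlinarith [pow_nonneg (sq_nonneg t) 3]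
      linarith
  have h0 := mono Set.self_mem_Ici (Set.mem_Ici.2 hx) hx
  simp only [Real.arctan_zero] at h0
  norm_num at h0
  linarith

private lemma arctan_lb {x : ℝ} (hx : 0 ≤ x) :
    x - x^3/3 + x^5/5 - x^7/7 ≤ Real.arctan x := by
  have key : ∀ t : ℝ, HasDerivAt
      (fun s => Real.arctan s - (s - s^3/3 + s^5/5 - s^7/7))
      (1/(1+t^2) - (1 - t^2 + t^4 - t^6)) t := by
    intro t
    have h := (Real.hasDerivAt_arctan t).sub
      ((((hasDerivAt_id t).sub ((hasDerivAt_pow 3 t).div_const 3)).add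
        ((hasDerivAt_pow 5 t).div_const 5)).sub ((hasDerivAt_pow 7 t).div_const 7))
    refine h.congr_deriv ?_
    push_cast; ring
  have mono : MonotoneOn (fun s => Real.arctan s - (s - s^3/3 + s^5/5 - s^7/7))
      (Set.Ici 0) := by
    apply monotoneOn_of_deriv_nonneg (convex_Ici 0)
    · exact fun t _ => (key t).continuousAt.continuousWithinAt
    · exact fun t _ => (key t).differentiableAt.differentiableWithinAt
    · intro t _
      rw [(key t).deriv]
      have h1 : (0:ℝ) < 1 + t^2 := by positivity
      have : 1 - t^2 + t^4 - t^6 ≤ 1/(1+t^2) := by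
        rw [le_div_iff₀ h1]; nlinarith [pow_nonneg (sq_nonneg t) 4]
      linarith
  have h0 := mono Set.self_mem_Ici (Set.mem_Ici.2 hx) hx
  simp only [Real.arctan_zero] at h0
  norm_num at h0
  linarith

private lemma arsinh_ub {x : ℝ} (hx : 0 ≤ x) :
    Real.arsinh x ≤ x - x^3/6 + 3*x^5/40 := by
  have key : ∀ t : ℝ, HasDerivAt (fun s => s - s^3/6 + 3*s^5/40 - Real.arsinh s)
      (1 - t^2/2 + 3*t^4/8 - (Real.sqrt (1+t^2))⁻¹) t := by
    intro t
    have h := (((hasDerivAt_id t).sub ((hasDerivAt_pow 3 t).div_const 6)).add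
        (((hasDerivAt_pow 5 t).const_mul 3).div_const 40)).sub (Real.hasDerivAt_arsinh t)
    refine h.congr_deriv ?_
    push_cast; ring
  have mono : MonotoneOn (fun s => s - s^3/6 + 3*s^5/40 - Real.arsinh s) (Set.Ici 0) := by
    apply monotoneOn_of_deriv_nonneg (convex_Ici 0)
    · exact fun t _ => (key t).continuousAt.continuousWithinAt
    · exact fun t _ => (key t).differentiableAt.differentiableWithinAt
    · intro t _
      rw [(key t).deriv]
      have h1 : (0:ℝ) < 1 + t^2 := by positivity
      have hs : 0 < Real.sqrt (1+t^2) := Real.sqrt_pos.2 h1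
      have hQ : (0:ℝ) ≤ 1 - t^2/2 + 3*t^4/8 := by nlinarith [sq_nonneg (t^2 - 2/3)]
      have key2 : 1 ≤ (1 - t^2/2 + 3*t^4/8)^2 * (1+t^2) := by
        nlinarith [mul_nonneg (pow_nonneg (sq_nonneg t) 3) (sq_nonneg (3*t^2 - 5/2)),
          pow_nonneg (sq_nonneg t) 3]
      have heq : (1 - t^2/2 + 3*t^4/8) * Real.sqrt (1+t^2)
          = Real.sqrt ((1 - t^2/2 + 3*t^4/8)^2 * (1+t^2)) := by
        rw [Real.sqrt_mul (sq_nonneg _), Real.sqrt_sq hQ]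
      have hge : 1 ≤ (1 - t^2/2 + 3*t^4/8) * Real.sqrt (1+t^2) := by
        rw [heq]
        calc (1:ℝ) = Real.sqrt 1 := Real.sqrt_one.symm
          _ ≤ _ := Real.sqrt_le_sqrt key2
      have hinv : (Real.sqrt (1+t^2))⁻¹ ≤ 1 - t^2/2 + 3*t^4/8 := by
        rw [inv_eq_one_div, div_le_iff₀ hs]
        linarith [hge]
      linarith
  have h0 := mono Set.self_mem_Ici (Set.mem_Ici.2 hx) hx
  simp only [Real.arsinh_zero] at h0
  norm_num at h0
  linarith

private lemma arsinh_lb {x : ℝ} (hx : 0 ≤ x) (hx2 : x ≤ 1/2) :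
    x - x^3/6 + 3*x^5/40 - x^7/7 ≤ Real.arsinh x := by
  have key : ∀ t : ℝ, HasDerivAt
      (fun s => Real.arsinh s - (s - s^3/6 + 3*s^5/40 - s^7/7))
      ((Real.sqrt (1+t^2))⁻¹ - (1 - t^2/2 + 3*t^4/8 - t^6)) t := by
    intro t
    have h := (Real.hasDerivAt_arsinh t).sub
      ((((hasDerivAt_id t).sub ((hasDerivAt_pow 3 t).div_const 6)).add
        (((hasDerivAt_pow 5 t).const_mul 3).div_const 40)).sub
        ((hasDerivAt_pow 7 t).div_const 7))
    refine h.congr_deriv ?_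
    push_cast; ring
  have mono : MonotoneOn (fun s => Real.arsinh s - (s - s^3/6 + 3*s^5/40 - s^7/7))
      (Set.Icc 0 (1/2)) := by
    apply monotoneOn_of_deriv_nonneg (convex_Icc 0 (1/2))
    · exact fun t _ => (key t).continuousAt.continuousWithinAt
    · exact fun t _ => (key t).differentiableAt.differentiableWithinAt
    · intro t ht
      rw [interior_Icc] at ht
      obtain ⟨ht0, ht2⟩ := ht
      rw [(key t).deriv]
      have h1 : (0:ℝ) < 1 + t^2 := by positivity
      have hs : 0 < Real.sqrt (1+t^2) := Real.sqrt_pos.2 h1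
      have ht := ht0.le
      have h2 : t^2 ≤ 1/4 := by nlinarith
      have h4 : t^4 ≤ 1/16 := by nlinarith [mul_le_mul_of_nonneg_left h2 (sq_nonneg t)]
      have h6 : t^6 ≤ 1/64 := by nlinarith [mul_le_mul_of_nonneg_left h4 (sq_nonneg t)]
      have h8 : t^8 ≤ 1/256 := by nlinarith [mul_le_mul_of_nonneg_left h6 (sq_nonneg t)]
      have h10 : t^10 ≤ t^6/16 := by
        nlinarith [mul_le_mul_of_nonneg_left h4 (pow_nonneg ht 6)]
      have h12 : t^12 ≤ t^6/64 := by
        nlinarith [mul_le_mul_of_nonneg_left h6 (pow_nonneg ht 6)]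
      have h14 : t^14 ≤ t^6/256 := by
        nlinarith [mul_le_mul_of_nonneg_left h8 (pow_nonneg ht 6)]
      have hP : (0:ℝ) ≤ 1 - t^2/2 + 3*t^4/8 - t^6 := by
        nlinarith [pow_nonneg ht 4]
      have key2 : (1 - t^2/2 + 3*t^4/8 - t^6)^2 * (1+t^2) ≤ 1 := by
        nlinarith [pow_nonneg ht 6, pow_nonneg ht 8, h10, h12, h14]
      have heq : (1 - t^2/2 + 3*t^4/8 - t^6) * Real.sqrt (1+t^2)
          = Real.sqrt ((1 - t^2/2 + 3*t^4/8 - t^6)^2 * (1+t^2)) := by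
        rw [Real.sqrt_mul (sq_nonneg _), Real.sqrt_sq hP]
      have hle : (1 - t^2/2 + 3*t^4/8 - t^6) * Real.sqrt (1+t^2) ≤ 1 := by
        rw [heq]
        calc Real.sqrt ((1 - t^2/2 + 3*t^4/8 - t^6)^2 * (1+t^2))
            ≤ Real.sqrt 1 := Real.sqrt_le_sqrt key2
          _ = 1 := Real.sqrt_one
      have hinv : 1 - t^2/2 + 3*t^4/8 - t^6 ≤ (Real.sqrt (1+t^2))⁻¹ := by
        rw [inv_eq_one_div, le_div_iff₀ hs]
        linarith [hle]
      linarith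
  have h0 := mono (Set.left_mem_Icc.2 (by norm_num)) ⟨hx, hx2⟩ hx
  simp only [Real.arsinh_zero] at h0
  norm_num at h0
  linarith

private lemma core {x : ℝ} (hx0 : 0 < x) (hx2 : x ≤ 1/2) :
    |x * Real.arctan x - (Real.arsinh x)^2 - x^6/45| ≤ x^8 := by
  set a := Real.arctan x with ha
  set s := Real.arsinh x with hs
  have ha1 := arctan_lb hx0.le
  have ha2 := arctan_ub hx0.le
  have hs1 := arsinh_lb hx0.le hx2
  have hs2 := arsinh_ub hx0.le
  have hP0 : (0:ℝ) ≤ x - x^3/6 + 3*x^5/40 - x^7/7 := by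
    have h2 : x^2 ≤ 1/4 := by nlinarith
    have h4 : x^4 ≤ 1/16 := by nlinarith [mul_le_mul_of_nonneg_left h2 (sq_nonneg x)]
    have h6 : x^6 ≤ 1/64 := by nlinarith [mul_le_mul_of_nonneg_left h4 (sq_nonneg x)]
    have hx3 : x^3 ≤ x/4 := by nlinarith [mul_le_mul_of_nonneg_left h2 hx0.le]
    have hx7 : x^7 ≤ x/64 := by nlinarith [mul_le_mul_of_nonneg_left h6 hx0.le]
    nlinarith [pow_nonneg hx0.le 5]
  have hs0 : 0 ≤ s := le_trans hP0 hs1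
  have hsu : s^2 ≤ (x - x^3/6 + 3*x^5/40)^2 := by nlinarith
  have hsl : (x - x^3/6 + 3*x^5/40 - x^7/7)^2 ≤ s^2 := by nlinarith
  have hau : x * a ≤ x * (x - x^3/3 + x^5/5) :=
    mul_le_mul_of_nonneg_left ha2 hx0.le
  have hal : x * (x - x^3/3 + x^5/5 - x^7/7) ≤ x * a :=
    mul_le_mul_of_nonneg_left ha1 hx0.le
  rw [abs_le]
  constructor
  · nlinarith [pow_pos hx0 8, pow_pos hx0 10, pow_pos hx0 14]
  · nlinarith [pow_pos hx0 8, pow_pos hx0 10, pow_pos hx0 14]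

/-- Point-target MIMO: `η(u) − β(u)² = 1/(1440u⁴) + O(1/u⁶)` as `u → ∞`. -/
theorem pt_mimo_crb_asymptotics :
    (fun u : ℝ =>
      (u * Real.arctan (1/(2*u)) + 2*u^2 * (Real.arsinh (1/(2*u)))^2)
        - (2*u * Real.arsinh (1/(2*u)))^2
        - 1/(1440*u^4))
      =O[atTop] (fun u : ℝ => 1/u^6) := by
  rw [Asymptotics.isBigO_iff]
  refine ⟨1, ?_⟩
  filter_upwards [eventually_ge_atTop (1:ℝ)] with u hu
  have hu0 : (0:ℝ) < u := lt_of_lt_of_le one_pos hu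
  set x : ℝ := 1/(2*u) with hxdef
  have hx0 : 0 < x := by rw [hxdef]; positivity
  have hx2 : x ≤ 1/2 := by
    rw [hxdef, div_le_div_iff₀ (by linarith) (by norm_num)]
    linarith
  have hcore := core hx0 hx2
  have hid : (u * Real.arctan x + 2*u^2 * (Real.arsinh x)^2)
      - (2*u * Real.arsinh x)^2 - 1/(1440*u^4)
      = (x * Real.arctan x - (Real.arsinh x)^2 - x^6/45) / (2*x^2) := by
    rw [hxdef]
    field_simp
    ring
  simp only [Real.norm_eq_abs]
  rw [hid, abs_div]
  have h2x : (0:ℝ) < 2*x^2 := by positivity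
  rw [abs_of_pos h2x, abs_of_pos (show (0:ℝ) < 1/u^6 by positivity), one_mul,
    div_le_iff₀ h2x]
  have hrw : 1/u^6 * (2*x^2) = 128 * x^8 := by
    rw [hxdef]
    field_simp
    ring
  rw [hrw]
  calc |x * Real.arctan x - (Real.arsinh x)^2 - x^6/45| ≤ x^8 := hcore
    _ ≤ 128 * x^8 := by nlinarith [pow_pos hx0 8]
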